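/- Let G be a group, H a subgroup of finite index in G, and N a normal subgroup of G contained in H. Then the transfer map is compatible with passage to the quotient by N: the composite of the transfer Ver_{G,H} : G/[G,G] → H/[H,H] with the natural map H/[H,H] → (H/N)/[H/N, H/N] equals the composite of the natural map G/[G,G] → (G/N)/[G/N, G/N] with the transfer Ver_{G/N, H/N} : (G/N)/[G/N,G/N] → (H/N)/[H/N,H/N]. -/

import Mathlib

open Subgroup Subgroup.leftTransversals QuotientGroup
open scoped Pointwise

section TransferAux

variable {G : Type*} [Group G] {H : Subgroup G} {A B : Type*} [CommGroup A] [CommGroup B]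

/-- A group-hom image of a transversal difference is the difference for the composite. -/
private lemma aux_map_diff [H.FiniteIndex] (ϕ : H →* A) (ψ : A →* B)
    (S T : H.LeftTransversal) :
    ψ (Subgroup.leftTransversals.diff ϕ S T) =
      Subgroup.leftTransversals.diff (ψ.comp ϕ) S T := by
  unfold Subgroup.leftTransversals.diff
  rw [map_prod]
  rfl

/-- Post-composition of the transfer with a homomorphism. -/
private lemma aux_comp_transfer [H.FiniteIndex] (ϕ : H →* A) (ψ : A →* B) (g : G) :
    ψ (MonoidHom.transfer ϕ g) = MonoidHom.transfer (ψ.comp ϕ) g := by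
  rw [MonoidHom.transfer_def ϕ default g, MonoidHom.transfer_def (ψ.comp ϕ) default g,
    aux_map_diff]

variable (H) (N : Subgroup G) [N.Normal]

private lemma aux_mem_map_mk'_iff (hNH : N ≤ H) {x : G} :
    QuotientGroup.mk' N x ∈ H.map (QuotientGroup.mk' N) ↔ x ∈ H := by
  constructor
  · rintro ⟨h, hh, he⟩
    have : h⁻¹ * x ∈ N := by
      rw [← QuotientGroup.ker_mk' N, MonoidHom.mem_ker, map_mul, map_inv, he, inv_mul_cancel]
    have := H.mul_mem hh (hNH this)
    rwa [mul_inv_cancel_left] at this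
  · exact fun hx => ⟨x, hx, rfl⟩

/-- The induced map on coset spaces. -/
private def auxQmap : G ⧸ H → (G ⧸ N) ⧸ (H.map (QuotientGroup.mk' N)) :=
  Quotient.map' (QuotientGroup.mk' N) (fun a b hab => by
    rw [QuotientGroup.leftRel_apply] at hab ⊢
    rw [← map_inv, ← map_mul]
    exact Subgroup.mem_map_of_mem _ hab)

private lemma auxQmap_mk (g : G) :
    auxQmap H N (Quotient.mk'' g) = Quotient.mk'' (QuotientGroup.mk' N g) :=
  Quotient.map'_mk'' _ _ g

private lemma auxQmap_bijective (hNH : N ≤ H) : Function.Bijective (auxQmap H N) := by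
  constructor
  · intro a b hab
    induction a using Quotient.inductionOn'
    induction b using Quotient.inductionOn'
    rename_i a b
    rw [auxQmap_mk, auxQmap_mk] at hab
    have := Quotient.exact' hab
    rw [QuotientGroup.leftRel_apply, ← map_inv, ← map_mul,
      aux_mem_map_mk'_iff H N hNH] at this
    exact Quotient.sound' (QuotientGroup.leftRel_apply.mpr this)
  · intro q
    induction q using Quotient.inductionOn'
    rename_i q
    obtain ⟨g, rfl⟩ := QuotientGroup.mk'_surjective N q
    exact ⟨Quotient.mk'' g, auxQmap_mk H N g⟩

/-- The image of a left transversal of `H` in `G` is a left transversal of the image of `H`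
in `G ⧸ N`. -/
private lemma aux_image_mem_leftTransversals (hNH : N ≤ H)
    (T : H.LeftTransversal) :
    IsComplement ((QuotientGroup.mk' N) '' (T : Set G))
        ((H.map (QuotientGroup.mk' N)) : Set (G ⧸ N)) := by
  refine Subgroup.isComplement_iff_existsUnique_inv_mul_mem.mpr fun q => ?_
  obtain ⟨g, rfl⟩ := QuotientGroup.mk'_surjective N q
  obtain ⟨t, ht, huniq⟩ :=
    Subgroup.isComplement_iff_existsUnique_inv_mul_mem.mp T.2 g
  refine ⟨⟨QuotientGroup.mk' N t, Set.mem_image_of_mem _ t.2⟩, ?_, ?_⟩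
  · show (QuotientGroup.mk' N (t : G))⁻¹ * QuotientGroup.mk' N g ∈ _
    rw [← map_inv, ← map_mul]
    exact Subgroup.mem_map_of_mem _ ht
  · rintro ⟨-, t', ht', rfl⟩ h
    replace h : (QuotientGroup.mk' N t')⁻¹ * QuotientGroup.mk' N g ∈
        H.map (QuotientGroup.mk' N) := h
    rw [← map_inv, ← map_mul, aux_mem_map_mk'_iff H N hNH] at h
    exact Subtype.ext (congr_arg (QuotientGroup.mk' N)
      (Subtype.ext_iff.mp (huniq ⟨t', ht'⟩ h)))

/-- The image transversal. -/
private noncomputable def auxImageT (hNH : N ≤ H) (T : H.LeftTransversal) :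
    (H.map (QuotientGroup.mk' N)).LeftTransversal :=
  ⟨(QuotientGroup.mk' N) '' (T : Set G), aux_image_mem_leftTransversals H N hNH T⟩

private lemma aux_toEquiv_imageT (hNH : N ≤ H) (T : H.LeftTransversal)
    (q : G ⧸ H) :
    ((IsComplement.leftQuotientEquiv (auxImageT H N hNH T).2 (auxQmap H N q) : G ⧸ N)) =
      QuotientGroup.mk' N (IsComplement.leftQuotientEquiv T.2 q : G) := by
  have hbij := Subgroup.isComplement_subgroup_right_iff_bijective.mp (auxImageT H N hNH T).2
  have h1 : Quotient.mk'' ((IsComplement.leftQuotientEquiv (auxImageT H N hNH T).2 (auxQmap H N q) : G ⧸ N)) =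
      auxQmap H N q := IsComplement.quotientGroupMk_leftQuotientEquiv _ _
  have h2 : Quotient.mk'' (QuotientGroup.mk' N (IsComplement.leftQuotientEquiv T.2 q : G)) = auxQmap H N q := by
    conv_rhs => rw [← IsComplement.quotientGroupMk_leftQuotientEquiv T.2 q]
    rw [auxQmap_mk]
  exact Subtype.ext_iff.mp (hbij.injective (a₁ := IsComplement.leftQuotientEquiv (auxImageT H N hNH T).2 (auxQmap H N q))
    (a₂ := ⟨QuotientGroup.mk' N (IsComplement.leftQuotientEquiv T.2 q : G),
      Set.mem_image_of_mem _ (IsComplement.leftQuotientEquiv T.2 q).2⟩) (h1.trans h2.symm))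

variable [H.FiniteIndex] [(H.map (QuotientGroup.mk' N)).FiniteIndex]

private lemma aux_diff_image (hNH : N ≤ H)
    (ϕ : ↥(H.map (QuotientGroup.mk' N)) →* A) (S T : H.LeftTransversal) :
    Subgroup.leftTransversals.diff ϕ (auxImageT H N hNH S) (auxImageT H N hNH T) =
      Subgroup.leftTransversals.diff
        (ϕ.comp ((QuotientGroup.mk' N).subgroupMap H)) S T := by
  unfold Subgroup.leftTransversals.diff
  letI := H.fintypeQuotientOfFiniteIndex
  letI := (H.map (QuotientGroup.mk' N)).fintypeQuotientOfFiniteIndex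
  refine (Fintype.prod_equiv (Equiv.ofBijective _ (auxQmap_bijective H N hNH))
    _ _ fun q => ?_).symm
  rw [MonoidHom.comp_apply]
  refine congrArg ϕ (Subtype.ext ?_)
  show _ = ((IsComplement.leftQuotientEquiv (auxImageT H N hNH S).2 (auxQmap H N q) : G ⧸ N))⁻¹ *
      (IsComplement.leftQuotientEquiv (auxImageT H N hNH T).2 (auxQmap H N q) : G ⧸ N)
  rw [aux_toEquiv_imageT, aux_toEquiv_imageT, ← map_inv, ← map_mul]
  rfl

omit [H.FiniteIndex] [(Subgroup.map (QuotientGroup.mk' N) H).FiniteIndex] in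
private lemma aux_smul_imageT (hNH : N ≤ H) (g : G) (T : H.LeftTransversal) :
    auxImageT H N hNH (g • T) = (QuotientGroup.mk' N g) • (auxImageT H N hNH T) := by
  apply Subtype.ext
  show (QuotientGroup.mk' N) '' (g • (T : Set G)) =
    (QuotientGroup.mk' N g) • ((QuotientGroup.mk' N) '' (T : Set G))
  exact Set.image_smul_distrib (QuotientGroup.mk' N) g (T : Set G)

/-- Key lemma: transfer commutes with quotient by a normal subgroup contained in `H`. -/
private lemma aux_transfer_quotient (hNH : N ≤ H)
    (ϕ : ↥(H.map (QuotientGroup.mk' N)) →* A) (g : G) :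
    MonoidHom.transfer ϕ (QuotientGroup.mk' N g) =
      MonoidHom.transfer (ϕ.comp ((QuotientGroup.mk' N).subgroupMap H)) g := by
  rw [MonoidHom.transfer_def (ϕ.comp ((QuotientGroup.mk' N).subgroupMap H)) default g,
    MonoidHom.transfer_def ϕ (auxImageT H N hNH default) (QuotientGroup.mk' N g),
    ← aux_diff_image H N hNH, aux_smul_imageT H N hNH]

end TransferAux

/-- **Compatibility of the transfer with quotients.**
Let `H` be a subgroup of finite index in `G` and `N` a normal subgroup of `G`
with `N ≤ H`.  Then the composite of the transfer
`Ver_{G,H} : G/[G,G] → H/[H,H]` with the natural map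
`H/[H,H] → (H/N)/[H/N,H/N]` equals the composite of the natural map
`G/[G,G] → (G/N)/[G/N,G/N]` with the transfer
`Ver_{G/N,H/N} : (G/N)/[G/N,G/N] → (H/N)/[H/N,H/N]`, where `H/N` is realized
as the image of `H` in `G/N`. -/
theorem transfer_comp_quotient_compat
    {G : Type*} [Group G] (H : Subgroup G) [H.FiniteIndex]
    (N : Subgroup G) [N.Normal] (hNH : N ≤ H) :
    letI : (H.map (QuotientGroup.mk' N)).FiniteIndex :=
      ⟨by
        rw [Subgroup.index_map_eq H (QuotientGroup.mk'_surjective N)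
          (by rw [QuotientGroup.ker_mk']; exact hNH)]
        exact Subgroup.FiniteIndex.index_ne_zero⟩
    (Abelianization.map ((QuotientGroup.mk' N).subgroupMap H)).comp
        (Abelianization.lift
          (MonoidHom.transfer (Abelianization.of : H →* _)))
      = (Abelianization.lift
          (MonoidHom.transfer
            (Abelianization.of : ↥(H.map (QuotientGroup.mk' N)) →* _))).comp
          (Abelianization.map (QuotientGroup.mk' N)) := by
  letI : (H.map (QuotientGroup.mk' N)).FiniteIndex :=
    ⟨by
      rw [Subgroup.index_map_eq H (QuotientGroup.mk'_surjective N)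
        (by rw [QuotientGroup.ker_mk']; exact hNH)]
      exact Subgroup.FiniteIndex.index_ne_zero⟩
  apply Abelianization.hom_ext
  apply MonoidHom.ext
  intro g
  simp only [MonoidHom.comp_apply, Abelianization.lift_apply_of, Abelianization.map_of]
  rw [aux_comp_transfer (Abelianization.of : H →* _)
      (Abelianization.map ((QuotientGroup.mk' N).subgroupMap H)) g]
  rw [aux_transfer_quotient H N hNH
    (Abelianization.of : ↥(H.map (QuotientGroup.mk' N)) →* _) g]
  congr 1
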